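/- Hardy type inequalities on the half-plane (Lemma A.1): Let f : 𝕋 × ℝ⁺ → ℝ be a function for which the quantities below are finite. (i) If λ > −1/2 and lim_{y→+∞} f(x,y) = 0 for each x, then ‖f⟨y⟩^λ‖_{L²(𝕋×ℝ⁺)} ≤ (2/(2λ+1))‖∂_y f ⟨y⟩^{λ+1}‖_{L²(𝕋×ℝ⁺)}. (ii) If λ < −1/2, then ‖f⟨y⟩^λ‖_{L²(𝕋×ℝ⁺)} ≤ √(−1/(2λ+1)) ‖f|_{y=0}‖_{L²(𝕋)} − (2/(2λ+1))‖∂_y f ⟨y⟩^{λ+1}‖_{L²(𝕋×ℝ⁺)}. -/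

import Mathlib

open MeasureTheory Real Set Filter
open scoped ENNReal NNReal Topology

noncomputable section

/-- Partial derivative in the tangential variable `x`. -/
def pdx (f : ℝ → ℝ → ℝ) : ℝ → ℝ → ℝ := fun x y => deriv (fun x' => f x' y) x

/-- Partial derivative in the normal variable `y`. -/
def pdy (f : ℝ → ℝ → ℝ) : ℝ → ℝ → ℝ := fun x y => deriv (fun y' => f x y') y

/-- Mixed partial derivative `∂ₓ^a ∂_y^b`. -/
def pd (a b : ℕ) (f : ℝ → ℝ → ℝ) : ℝ → ℝ → ℝ := pdx^[a] (pdy^[b] f)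

/-- Time derivative of a time-dependent field. -/
def pdt (f : ℝ → ℝ → ℝ → ℝ) : ℝ → ℝ → ℝ → ℝ := fun t x y => deriv (fun s => f s x y) t

/-- The weight `⟨y⟩ = 1 + y`. -/
def wt (y : ℝ) : ℝ := 1 + y

/-- The measure on the strip `𝕋 × ℝ⁺`, with `𝕋` realized as `[0,1)`. -/
def strip : Measure (ℝ × ℝ) :=
  (volume.restrict (Ioo (0:ℝ) 1)).prod (volume.restrict (Ioi (0:ℝ)))

/-- Squared weighted `L²(𝕋 × ℝ⁺)` norm `‖f ⟨y⟩^λ‖²`. -/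
def sqL2 (lam : ℝ) (f : ℝ → ℝ → ℝ) : ℝ≥0∞ :=
  eLpNorm (fun p : ℝ × ℝ => f p.1 p.2 * wt p.2 ^ lam) 2 strip ^ 2

/-- Squared weighted `L^∞(𝕋 × ℝ⁺)` norm. -/
def sqLinf (lam : ℝ) (f : ℝ → ℝ → ℝ) : ℝ≥0∞ :=
  eLpNorm (fun p : ℝ × ℝ => f p.1 p.2 * wt p.2 ^ lam) ⊤ strip ^ 2

/-- Squared weighted `L²(ℝ⁺)` norm in the normal variable. -/
def sqL2y (lam : ℝ) (f : ℝ → ℝ) : ℝ≥0∞ :=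
  eLpNorm (fun y => f y * wt y ^ lam) 2 (volume.restrict (Ioi (0:ℝ))) ^ 2

/-- Squared `L^∞(ℝ⁺)` norm in the normal variable. -/
def sqLinfy (f : ℝ → ℝ) : ℝ≥0∞ :=
  eLpNorm f ⊤ (volume.restrict (Ioi (0:ℝ))) ^ 2

/-- Multi-indices `α = (α₁, α₂)` with `|α| ≤ s` and `α₁ ≤ cap`. -/
def idxLe (s cap : ℕ) : Finset (ℕ × ℕ) :=
  (Finset.range (s+1) ×ˢ Finset.range (s+1)).filter fun p => p.1 + p.2 ≤ s ∧ p.1 ≤ cap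

/-- Multi-indices `α = (α₁, α₂)` with `|α| ≤ s`. -/
def idxAll (s : ℕ) : Finset (ℕ × ℕ) :=
  (Finset.range (s+1) ×ˢ Finset.range (s+1)).filter fun p => p.1 + p.2 ≤ s

/-- Squared unweighted `H^s(𝕋 × ℝ⁺)` norm. -/
def sqH (s : ℕ) (f : ℝ → ℝ → ℝ) : ℝ≥0∞ := ∑ p ∈ idxAll s, sqL2 0 (pd p.1 p.2 f)

/-- Squared weighted `H^s_{y,λ}` norm at fixed `x`. -/
def sqHy (s : ℕ) (lam : ℝ) (f : ℝ → ℝ → ℝ) (x : ℝ) : ℝ≥0∞ :=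
  ∑ p ∈ idxAll s, sqL2y lam (fun y => pd p.1 p.2 f x y)

/-- Infinitely differentiable function of one variable. -/
def Smooth1 (f : ℝ → ℝ) : Prop := ∀ n : ℕ, ContDiff ℝ n f

/-- Infinitely differentiable function of two variables. -/
def Smooth2 (f : ℝ → ℝ → ℝ) : Prop := ∀ n : ℕ, ContDiff ℝ n (fun p : ℝ × ℝ => f p.1 p.2)

/-- Infinitely differentiable function of three variables. -/
def Smooth3 (f : ℝ → ℝ → ℝ → ℝ) : Prop :=
  ∀ n : ℕ, ContDiff ℝ n (fun p : ℝ × ℝ × ℝ => f p.1 p.2.1 p.2.2)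

/-- The good unknown `w_g = ∂ₓ⁶w − (∂_y w / w) ∂ₓ⁶u`, where `w = ∂_y u`. -/
def goodW (u : ℝ → ℝ → ℝ) : ℝ → ℝ → ℝ := fun x y =>
  pd 6 1 u x y - pd 0 2 u x y / pd 0 1 u x y * pd 6 0 u x y

/-- The good unknown `ϱ_g = ∂ₓ⁶ϱ − (∂_y ϱ / w) ∂ₓ⁶u`, where `w = ∂_y u`. -/
def goodR (vr u : ℝ → ℝ → ℝ) : ℝ → ℝ → ℝ := fun x y =>
  pd 6 0 vr x y - pd 0 1 vr x y / pd 0 1 u x y * pd 6 0 u x y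

/-- Energy norm `E` for the unsteady problem, where `vr = ρ − ϱ∞` and `w = ∂_y u`. -/
def energyU (γ σ : ℝ) (vr u : ℝ → ℝ → ℝ) : ℝ≥0∞ :=
  (∑ p ∈ idxLe 6 5, sqL2 (γ + (p.2 : ℝ)) (pd p.1 p.2 (pd 0 1 u)))
  + (∑ p ∈ idxLe 6 5, sqL2 (σ + (p.2 : ℝ)) (pd p.1 p.2 vr))
  + sqL2 γ (goodR vr u) + sqL2 γ (goodW u)
  + (∑ p ∈ idxLe 2 2, sqLinf (σ + (p.2 : ℝ)) (pd p.1 p.2 (pd 0 1 u)))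

/-- Dissipation norm `D` for the unsteady problem. -/
def dissU (γ : ℝ) (u : ℝ → ℝ → ℝ) : ℝ≥0∞ :=
  (∑ p ∈ idxLe 6 5, sqL2 (γ + (p.2 : ℝ)) (pd 0 1 (pd p.1 p.2 (pd 0 1 u))))
  + sqL2 γ (pd 0 1 (goodW u))

/-- The auxiliary energy `E₂` of Lemma 3.1. -/
def energyU2 (γ σ : ℝ) (vr u : ℝ → ℝ → ℝ) : ℝ≥0∞ :=
  (∑ p ∈ idxLe 6 6, sqL2 (γ + (p.2 : ℝ)) (pd p.1 p.2 (pd 0 1 u)))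
  + (∑ p ∈ idxLe 6 5, sqL2 (σ + (p.2 : ℝ)) (pd p.1 p.2 vr))
  + sqL2 γ (pd 6 0 vr)
  + (∑ p ∈ idxLe 2 2, sqLinf (σ + (p.2 : ℝ)) (pd p.1 p.2 (pd 0 1 u)))

/-- The function `I = Σ_{|α| ≤ 2} |∂^α w ⟨y⟩^{σ+α₂}|²`, with `w = ∂_y u`. -/
def Ifun (σ : ℝ) (u : ℝ → ℝ → ℝ) : ℝ → ℝ → ℝ := fun x y =>
  ∑ p ∈ idxLe 2 2, (pd p.1 p.2 (pd 0 1 u) x y * wt y ^ (σ + (p.2 : ℝ))) ^ 2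

/-- `‖I‖_{L^∞(𝕋 × ℝ⁺)}`. -/
def linfI (σ : ℝ) (u : ℝ → ℝ → ℝ) : ℝ≥0∞ :=
  eLpNorm (fun q : ℝ × ℝ => Ifun σ u q.1 q.2) ⊤ strip

/-- Infimum over the strip `𝕋 × ℝ⁺`. -/
def infStrip (f : ℝ → ℝ → ℝ) : ℝ := ⨅ p : ℝ × {y : ℝ // 0 < y}, f p.1 p.2.1

/-- A classical solution of the inhomogeneous unsteady Prandtl system on
`[0,T] × 𝕋 × ℝ⁺` with constant outer Euler flow `(ϱ∞, u∞)` and initial data `(ρ₀, u₀)`. -/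
structure IsPrandtlSol (T ϱinf uinf : ℝ) (ρ u v : ℝ → ℝ → ℝ → ℝ)
    (ρ₀ u₀ : ℝ → ℝ → ℝ) : Prop where
  periodic : ∀ t x y : ℝ, ρ t (x+1) y = ρ t x y ∧ u t (x+1) y = u t x y ∧ v t (x+1) y = v t x y
  mass : ∀ t ∈ Icc (0:ℝ) T, ∀ x : ℝ, ∀ y > (0:ℝ),
    pdt ρ t x y + u t x y * pdx (ρ t) x y + v t x y * pdy (ρ t) x y = 0
  momentum : ∀ t ∈ Icc (0:ℝ) T, ∀ x : ℝ, ∀ y > (0:ℝ),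
    ρ t x y * pdt u t x y + ρ t x y * u t x y * pdx (u t) x y
      + ρ t x y * v t x y * pdy (u t) x y - pd 0 2 (u t) x y = 0
  divfree : ∀ t ∈ Icc (0:ℝ) T, ∀ x : ℝ, ∀ y > (0:ℝ), pdx (u t) x y + pdy (v t) x y = 0
  noslip : ∀ t ∈ Icc (0:ℝ) T, ∀ x : ℝ, u t x 0 = 0 ∧ v t x 0 = 0
  farfield : ∀ t ∈ Icc (0:ℝ) T, ∀ x : ℝ,
    Tendsto (fun y => ρ t x y) atTop (𝓝 ϱinf) ∧ Tendsto (fun y => u t x y) atTop (𝓝 uinf)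
  init : ∀ x y : ℝ, ρ 0 x y = ρ₀ x y ∧ u 0 x y = u₀ x y

/-- A smooth solution of the regularized inhomogeneous Prandtl system on
`[0,T] × 𝕋 × ℝ⁺`, where `vr = ϱ^ε = ρ^ε − ϱ∞`. -/
structure IsRegSol (ε T ϱinf uinf : ℝ) (vr u v : ℝ → ℝ → ℝ → ℝ) : Prop where
  smooth_vr : Smooth3 vr
  smooth_u : Smooth3 u
  smooth_v : Smooth3 v
  periodic : ∀ t x y : ℝ,
    vr t (x+1) y = vr t x y ∧ u t (x+1) y = u t x y ∧ v t (x+1) y = v t x y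
  mass : ∀ t ∈ Icc (0:ℝ) T, ∀ x : ℝ, ∀ y > (0:ℝ),
    pdt vr t x y + u t x y * pdx (vr t) x y + v t x y * pdy (vr t) x y
      - ε * pd 2 0 (vr t) x y = 0
  momentum : ∀ t ∈ Icc (0:ℝ) T, ∀ x : ℝ, ∀ y > (0:ℝ),
    pdt u t x y + u t x y * pdx (u t) x y + v t x y * pdy (u t) x y
      - ε * pd 2 0 (u t) x y - (vr t x y + ϱinf)⁻¹ * pd 0 2 (u t) x y = 0
  divfree : ∀ t ∈ Icc (0:ℝ) T, ∀ x : ℝ, ∀ y > (0:ℝ), pdx (u t) x y + pdy (v t) x y = 0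
  noslip : ∀ t ∈ Icc (0:ℝ) T, ∀ x : ℝ, u t x 0 = 0 ∧ v t x 0 = 0
  vort_bc : ∀ t ∈ Icc (0:ℝ) T, ∀ x : ℝ, pd 0 2 (u t) x 0 = 0
  farfield : ∀ t ∈ Icc (0:ℝ) T, ∀ x : ℝ,
    Tendsto (fun y => vr t x y) atTop (𝓝 0) ∧ Tendsto (fun y => u t x y) atTop (𝓝 uinf)

/-- The lower-bound condition (L): `w^ε ⟨y⟩^σ ≥ δ` and `κ ≤ ϱ^ε + ϱ∞ ≤ κ̄`. -/
def LowerBound (σ δ κ κb T ϱinf : ℝ) (vr u : ℝ → ℝ → ℝ → ℝ) : Prop :=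
  ∀ t ∈ Icc (0:ℝ) T, ∀ x : ℝ, ∀ y > (0:ℝ),
    δ ≤ pd 0 1 (u t) x y * wt y ^ σ ∧ κ ≤ vr t x y + ϱinf ∧ vr t x y + ϱinf ≤ κb

/-- Dissipation norm `D₁` for the regularized problem. -/
def dissReg (ε γ σ ϱinf : ℝ) (vr u : ℝ → ℝ → ℝ) : ℝ≥0∞ :=
  (∑ p ∈ idxLe 6 5, ENNReal.ofReal ε * sqL2 (γ + (p.2 : ℝ)) (pd 1 0 (pd p.1 p.2 (pd 0 1 u))))
  + (∑ p ∈ idxLe 6 5, sqL2 (γ + (p.2 : ℝ))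
      (fun x y => (Real.sqrt (vr x y + ϱinf))⁻¹ * pd 0 1 (pd p.1 p.2 (pd 0 1 u)) x y))
  + (∑ p ∈ idxLe 6 5, ENNReal.ofReal ε * sqL2 (σ + (p.2 : ℝ)) (pd 1 0 (pd p.1 p.2 vr)))
  + ENNReal.ofReal ε * sqL2 γ (pd 1 0 (goodW u))
  + sqL2 γ (fun x y => (Real.sqrt (vr x y + ϱinf))⁻¹ * pd 0 1 (goodW u) x y)
  + ENNReal.ofReal ε * sqL2 γ (pd 1 0 (goodR vr u))

/-- A classical solution of the steady inhomogeneous Prandtl system on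
`[0,L] × ℝ⁺` with constant outer Euler flow `(ϱ∞, u∞)`. -/
structure IsSteadySol (L ϱinf uinf : ℝ) (ρ u v : ℝ → ℝ → ℝ) : Prop where
  mass : ∀ x ∈ Icc (0:ℝ) L, ∀ y > (0:ℝ),
    u x y * pdx ρ x y + v x y * pdy ρ x y = 0
  momentum : ∀ x ∈ Icc (0:ℝ) L, ∀ y > (0:ℝ),
    ρ x y * u x y * pdx u x y + ρ x y * v x y * pdy u x y - pd 0 2 u x y = 0
  divfree : ∀ x ∈ Icc (0:ℝ) L, ∀ y > (0:ℝ), pdx u x y + pdy v x y = 0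
  noslip : ∀ x ∈ Icc (0:ℝ) L, u x 0 = 0 ∧ v x 0 = 0
  farfield : ∀ x ∈ Icc (0:ℝ) L,
    Tendsto (fun y => ρ x y) atTop (𝓝 ϱinf) ∧ Tendsto (fun y => u x y) atTop (𝓝 uinf)

/-- The quotient `v/u`. -/
def qdiv (u v : ℝ → ℝ → ℝ) : ℝ → ℝ → ℝ := fun x y => v x y / u x y

/-- Steady energy norm `X(x)`. -/
def energyS (m : ℕ) (σ ϱinf uinf : ℝ) (ρ u v : ℝ → ℝ → ℝ) (x : ℝ) : ℝ≥0∞ :=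
  (∑ p ∈ idxAll m, sqL2y 0 (fun y => pd p.1 p.2 (fun a b => ρ a b - ϱinf) x y))
  + (∑ p ∈ idxAll m,
      sqL2y σ (fun y => Real.sqrt (ρ x y) * u x y * pd p.1 (p.2+1) (qdiv u v) x y))
  + sqL2y 0 (fun y => u x y - uinf)
  + sqL2y 0 (fun y => pd 0 1 u x y)

/-- Steady dissipation norm `Y(x)`. -/
def dissS (m : ℕ) (σ : ℝ) (u v : ℝ → ℝ → ℝ) (x : ℝ) : ℝ≥0∞ :=
  ∑ p ∈ idxAll m, sqL2y σ (fun y => Real.sqrt (u x y) * pd p.1 (p.2+2) (qdiv u v) x y)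

/-- Fast decay of a function on `ℝ⁺` together with all its derivatives. -/
def FastDecay (f : ℝ → ℝ) : Prop :=
  ∀ k n : ℕ, Tendsto (fun y => y ^ n * iteratedDeriv k f y) atTop (𝓝 0)

/-- The initial vertical velocity `v|_{x=0} = −u₀(y) ∫₀^y ∂_{y'}² u₀ / (ρ₀ u₀²) dy'`. -/
def initialV (ρ₀ u₀ : ℝ → ℝ) : ℝ → ℝ := fun y =>
  -(u₀ y * ∫ s in Ioc (0:ℝ) y, iteratedDeriv 2 u₀ s / (ρ₀ s * (u₀ s) ^ 2))

/-- Generic compatibility conditions at the corner `(0,0)` up to order `m`: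
`∂ₓ^{k-1} ∂_y³ v |_{x=0,y=0} = 0` for `1 ≤ k ≤ m`, where `v|_{x=0}` is determined
by the initial data. -/
def GenericCompat (m : ℕ) (ϱinf uinf : ℝ) (ρ₀ u₀ : ℝ → ℝ) : Prop :=
  ∀ (L : ℝ) (ρ u v : ℝ → ℝ → ℝ), 0 < L →
    Smooth2 ρ → Smooth2 u → Smooth2 v →
    IsSteadySol L ϱinf uinf ρ u v →
    (∀ y : ℝ, ρ 0 y = ρ₀ y) → (∀ y : ℝ, u 0 y = u₀ y) →
    (∀ y : ℝ, v 0 y = initialV ρ₀ u₀ y) →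
    ∀ k : ℕ, 1 ≤ k → k ≤ m → pd (k - 1) 3 v 0 0 = 0

/-- The iteration scheme for the steady problem. -/
structure IsIterSol (L θ ϱinf uinf : ℝ) (ρ₀ u₀ q₀ : ℝ → ℝ)
    (R U Q : ℕ → ℝ → ℝ → ℝ) : Prop where
  smooth : ∀ k : ℕ, Smooth2 (R k) ∧ Smooth2 (U k) ∧ Smooth2 (Q k)
  base : ∀ x y : ℝ, R 0 x y = ρ₀ y ∧ U 0 x y = u₀ y ∧ Q 0 x y = q₀ y
  mass : ∀ k : ℕ, 1 ≤ k → ∀ x ∈ Icc (0:ℝ) L, ∀ y > (0:ℝ),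
    pdx (R k) x y + Q (k-1) x y * pdy (R k) x y = 0
  momentum : ∀ k : ℕ, 1 ≤ k → ∀ x ∈ Icc (0:ℝ) L, ∀ y > (0:ℝ),
    pdx (fun a b => R k a b * (U (k-1) a b + θ) ^ 2 * pdy (Q k) a b) x y
      - pd 0 3 (fun a b => U (k-1) a b * Q k a b) x y = 0
  divfree : ∀ k : ℕ, 1 ≤ k → ∀ x ∈ Icc (0:ℝ) L, ∀ y > (0:ℝ),
    pdx (U k) x y + pdy (fun a b => U (k-1) a b * Q k a b) x y = 0
  noslip : ∀ k : ℕ, 1 ≤ k → ∀ x ∈ Icc (0:ℝ) L, Q k x 0 = 0 ∧ U k x 0 = 0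
  farfield : ∀ k : ℕ, 1 ≤ k → ∀ x ∈ Icc (0:ℝ) L,
    Tendsto (fun y => R k x y) atTop (𝓝 ϱinf) ∧ Tendsto (fun y => U k x y) atTop (𝓝 uinf)
      ∧ Tendsto (fun y => pdy (Q k) x y) atTop (𝓝 0)
  init : ∀ k : ℕ, 1 ≤ k → ∀ y : ℝ, R k 0 y = ρ₀ y ∧ U k 0 y = u₀ y ∧ Q k 0 y = q₀ y

/-- Energy norm `X^k(x)` for the iteration scheme. -/
def energyIter (m : ℕ) (σ θ ϱinf uinf : ℝ) (R U Q : ℕ → ℝ → ℝ → ℝ)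
    (k : ℕ) (x : ℝ) : ℝ≥0∞ :=
  (∑ p ∈ idxAll m, sqL2y 0 (fun y => pd p.1 p.2 (fun a b => R k a b - ϱinf) x y))
  + (∑ p ∈ idxAll m, sqL2y σ
      (fun y => Real.sqrt (R k x y) * (U (k-1) x y + θ) * pd p.1 (p.2+1) (Q k) x y))
  + sqL2y 0 (fun y => U k x y - uinf)
  + sqL2y 0 (fun y => pd 0 1 (U k) x y)

/-- Dissipation norm `Y^k(x)` for the iteration scheme. -/
def dissIter (m : ℕ) (σ : ℝ) (U Q : ℕ → ℝ → ℝ → ℝ) (k : ℕ) (x : ℝ) : ℝ≥0∞ :=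
  ∑ p ∈ idxAll m, sqL2y σ (fun y => Real.sqrt (U (k-1) x y) * pd p.1 (p.2+2) (Q k) x y)

/-- Difference quotient `q̃ = (v₁ − v₂)/u₂` for the steady stability estimate. -/
def qtil (u₂ v₁ v₂ : ℝ → ℝ → ℝ) : ℝ → ℝ → ℝ := fun x y => (v₁ x y - v₂ x y) / u₂ x y

/-- `Φ(x) = ‖(√ρ₁ u₂ ∂_y q̃ ⟨y⟩^σ, ρ̃)(x,·)‖²_{L²_y}`. -/
def stabPhi (σ : ℝ) (ρ₁ ρ₂ u₂ v₁ v₂ : ℝ → ℝ → ℝ) (x : ℝ) : ℝ :=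
  (sqL2y σ (fun y => Real.sqrt (ρ₁ x y) * u₂ x y * pd 0 1 (qtil u₂ v₁ v₂) x y)
    + sqL2y 0 (fun y => ρ₁ x y - ρ₂ x y)).toReal

/-- `Ψ(x) = ‖(√u₂ ∂_y² q̃ ⟨y⟩^σ)(x,·)‖²_{L²_y}`. -/
def stabPsi (σ : ℝ) (u₂ v₁ v₂ : ℝ → ℝ → ℝ) (x : ℝ) : ℝ :=
  (sqL2y σ (fun y => Real.sqrt (u₂ x y) * pd 0 2 (qtil u₂ v₁ v₂) x y)).toReal

set_option maxHeartbeats 1000000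


lemma ofReal_sq_eq (r : ℝ) : (↑‖r‖₊ : ℝ≥0∞) ^ (2:ℝ) = ENNReal.ofReal (r ^ 2) := by
  rw [← enorm_eq_nnnorm, Real.enorm_eq_ofReal_abs, ENNReal.ofReal_rpow_of_nonneg (abs_nonneg _) (by norm_num)]
  congr 1
  rw [show ((2:ℝ)) = ((2:ℕ):ℝ) by norm_num, Real.rpow_natCast, sq_abs]

lemma eLpNorm_two_sq {α : Type*} [MeasurableSpace α] (μ : Measure α) (h : α → ℝ) :
    eLpNorm h 2 μ = (∫⁻ a, ENNReal.ofReal (h a ^ 2) ∂μ) ^ (1/2 : ℝ) := by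
  rw [eLpNorm_eq_lintegral_rpow_enorm_toReal (by norm_num) (by norm_num)]
  have h2 : (2 : ℝ≥0∞).toReal = (2:ℝ) := by norm_num
  rw [h2]
  congr 1
  exact lintegral_congr fun a => ofReal_sq_eq _

lemma young_ineq (u v ε : ℝ) (hε : 0 < ε) : 2*|u*v| ≤ ε*u^2 + v^2/ε := by
  rw [abs_mul]
  have h1 : 2*ε*(|u| * |v|) ≤ ε^2*u^2 + v^2 := by
    nlinarith [sq_nonneg (ε * |u| - |v|), sq_abs u, sq_abs v]
  have h2 : 2*(|u| * |v|) = (2*ε*(|u| * |v|))/ε := by field_simp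
  rw [h2, div_le_iff₀ hε]
  have h3 : (ε*u^2 + v^2/ε)*ε = ε^2*u^2 + v^2 := by field_simp
  rw [h3]; exact h1


lemma wpos {y : ℝ} (hy : 0 ≤ y) : (0:ℝ) < 1 + y := by linarith

lemma hasDeriv_w (p : ℝ) {y : ℝ} (hy : 0 ≤ y) :
    HasDerivAt (fun z : ℝ => (1+z)^p) (p*(1+y)^(p-1)) y := by
  have h : HasDerivAt (fun z : ℝ => 1+z) 1 y := (hasDerivAt_id y).const_add 1
  have := h.rpow_const (p := p) (Or.inl (ne_of_gt (wpos hy)))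
  simpa using this

lemma contOn_w (p : ℝ) : ContinuousOn (fun z : ℝ => (1+z)^p) (Ici 0) := by
  apply ContinuousOn.rpow_const
  · exact (continuous_const.add continuous_id).continuousOn
  · exact fun y hy => Or.inl (ne_of_gt (wpos hy))

section oneD
variable {mu : ℝ} {g g' : ℝ → ℝ}

lemma cont_g (hg : ∀ y, HasDerivAt g (g' y) y) : Continuous g :=
  continuous_iff_continuousAt.2 fun y => (hg y).continuousAt

/-- FTC identity -/
lemma ftc_id (hg : ∀ y, HasDerivAt g (g' y) y) (hg' : Continuous g')
    {R : ℝ} (hR : 0 ≤ R) (mu : ℝ) :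
    ∫ y in (0:ℝ)..R, (2 * g y * g' y * (1+y)^mu + mu * (g y^2*(1+y)^(mu-1)))
      = g R^2*(1+R)^mu - g 0^2 := by
  have huIcc : uIcc (0:ℝ) R ⊆ Ici 0 := by
    rw [uIcc_of_le hR]; exact Icc_subset_Ici_self
  have hder : ∀ y ∈ uIcc (0:ℝ) R, HasDerivAt (fun z => g z^2*(1+z)^mu)
      (2 * g y * g' y * (1+y)^mu + mu * (g y^2*(1+y)^(mu-1))) y := by
    intro y hy
    have h1 : HasDerivAt (fun z => g z^2) (2 * g y * g' y) y := by
      have := (hg y).fun_pow 2; simpa [mul_comm, mul_assoc, mul_left_comm] using this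
    have h2 := hasDeriv_w mu (huIcc hy)
    have := h1.fun_mul h2
    exact this.congr_deriv (by ring)
  have hint : IntervalIntegrable
      (fun y => 2 * g y * g' y * (1+y)^mu + mu * (g y^2*(1+y)^(mu-1))) volume 0 R := by
    apply ContinuousOn.intervalIntegrable
    have hgc := cont_g hg
    apply ContinuousOn.add
    · exact (((hgc.continuousOn.mul hg'.continuousOn).const_smul 2).congr (by intro x hx; simp [smul_eq_mul]; ring)).mul
        ((contOn_w mu).mono huIcc)
    · exact continuousOn_const.mul ((hgc.continuousOn.pow 2).mul ((contOn_w (mu-1)).mono huIcc))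
  have := intervalIntegral.integral_eq_sub_of_hasDerivAt hder hint
  rw [this]
  norm_num

end oneD

section oneD2
variable {mu : ℝ} {g g' : ℝ → ℝ}

lemma sq_rpow {y : ℝ} (hy : 0 ≤ y) (e : ℝ) : ((1+y)^e)^2 = (1+y)^(2*e) := by
  rw [← Real.rpow_natCast ((1+y)^e) 2, ← Real.rpow_mul (le_of_lt (wpos hy))]
  norm_num; ring_nf

/-- interval integrability of the weighted pieces -/
lemma ii_w {g : ℝ → ℝ} (h : Continuous g) (p : ℝ) {R : ℝ} (hR : 0 ≤ R) :
    IntervalIntegrable (fun y => g y * (1+y)^p) volume 0 R := by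
  apply ContinuousOn.intervalIntegrable
  have huIcc : uIcc (0:ℝ) R ⊆ Ici 0 := by
    rw [uIcc_of_le hR]; exact Icc_subset_Ici_self
  exact h.continuousOn.mul ((contOn_w p).mono huIcc)

lemma B_tail_le (hg' : Continuous g')
    (hBI : IntegrableOn (fun y => g' y^2*(1+y)^(mu+1)) (Ioi 0) volume)
    {N R : ℝ} (hN : 0 ≤ N) (hR : N ≤ R) :
    ∫ y in N..R, g' y^2*(1+y)^(mu+1) ≤ ∫ y in Ioi N, g' y^2*(1+y)^(mu+1) := by
  rw [intervalIntegral.integral_of_le hR]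
  apply setIntegral_mono_set (hBI.mono_set (Ioi_subset_Ioi hN))
  · filter_upwards [ae_restrict_mem measurableSet_Ioi] with y hy
    have : (0:ℝ) < 1 + y := wpos (le_of_lt (lt_of_le_of_lt hN hy))
    positivity
  · exact HasSubset.Subset.eventuallyLE (fun y hy => hy.1)

lemma B_tail_le_B (hg' : Continuous g')
    (hBI : IntegrableOn (fun y => g' y^2*(1+y)^(mu+1)) (Ioi 0) volume)
    {N : ℝ} (hN : 0 ≤ N) :
    ∫ y in Ioi N, g' y^2*(1+y)^(mu+1) ≤ ∫ y in Ioi 0, g' y^2*(1+y)^(mu+1) := by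
  apply setIntegral_mono_set hBI
  · filter_upwards [ae_restrict_mem measurableSet_Ioi] with y hy
    have : (0:ℝ) < 1 + y := wpos (le_of_lt hy)
    positivity
  · exact HasSubset.Subset.eventuallyLE (Ioi_subset_Ioi hN)

/-- The key interval inequality. -/
lemma key_ineq (hg : ∀ y, HasDerivAt g (g' y) y) (hg' : Continuous g')
    (hBI : IntegrableOn (fun y => g' y^2*(1+y)^(mu+1)) (Ioi 0) volume)
    {R ε : ℝ} (hR : 0 ≤ R) (hε : 0 < ε) :
    |mu * (∫ y in (0:ℝ)..R, g y^2*(1+y)^(mu-1)) - (g R^2*(1+R)^mu - g 0^2)|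
      ≤ ε * (∫ y in (0:ℝ)..R, g y^2*(1+y)^(mu-1))
        + (1/ε) * (∫ y in Ioi 0, g' y^2*(1+y)^(mu+1)) := by
  have hgc := cont_g hg
  have hiA : IntervalIntegrable (fun y => g y^2*(1+y)^(mu-1)) volume 0 R :=
    ii_w (hgc.pow 2) (mu-1) hR
  have hiB : IntervalIntegrable (fun y => g' y^2*(1+y)^(mu+1)) volume 0 R :=
    ii_w (hg'.pow 2) (mu+1) hR
  have hiJ : IntervalIntegrable (fun y => 2 * g y * g' y * (1+y)^mu) volume 0 R := by
    have hc : Continuous (fun y => 2 * g y * g' y) := by fun_prop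
    exact ii_w hc mu hR
  have hsplit := intervalIntegral.integral_add hiJ ((hiA.const_mul mu))
  have hftc := ftc_id hg hg' hR mu
  rw [hsplit] at hftc
  rw [intervalIntegral.integral_const_mul] at hftc
  -- mu*AR - (hR - g0²) = -J
  have hid : mu * (∫ y in (0:ℝ)..R, g y^2*(1+y)^(mu-1)) - (g R^2*(1+R)^mu - g 0^2)
      = -(∫ y in (0:ℝ)..R, 2 * g y * g' y * (1+y)^mu) := by linarith
  rw [hid, abs_neg]
  calc |∫ y in (0:ℝ)..R, 2 * g y * g' y * (1+y)^mu|
      ≤ ∫ y in (0:ℝ)..R, |2 * g y * g' y * (1+y)^mu| :=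
        intervalIntegral.abs_integral_le_integral_abs hR
    _ ≤ ∫ y in (0:ℝ)..R, (ε * (g y^2*(1+y)^(mu-1)) + (1/ε) * (g' y^2*(1+y)^(mu+1))) := by
        apply intervalIntegral.integral_mono_on hR
        · exact hiJ.abs
        · exact (hiA.const_mul ε).add (hiB.const_mul (1/ε))
        · intro y hy
          have hy0 : (0:ℝ) ≤ y := hy.1
          have hw := wpos hy0
          have h := young_ineq (g y*(1+y)^((mu-1)/2)) (g' y*(1+y)^((mu+1)/2)) ε hε
          have e1 : (g y*(1+y)^((mu-1)/2)) * (g' y*(1+y)^((mu+1)/2)) = g y * g' y * (1+y)^mu := by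
            rw [mul_mul_mul_comm, ← Real.rpow_add hw]
            ring_nf
          have e2 : (g y*(1+y)^((mu-1)/2))^2 = g y^2*(1+y)^(mu-1) := by
            rw [mul_pow, sq_rpow hy0]; ring_nf
          have e3 : (g' y*(1+y)^((mu+1)/2))^2 = g' y^2*(1+y)^(mu+1) := by
            rw [mul_pow, sq_rpow hy0]; ring_nf
          rw [e1, e2, e3] at h
          calc |2 * g y * g' y * (1+y)^mu| = 2*|g y * g' y * (1+y)^mu| := by
                rw [show 2 * g y * g' y * (1+y)^mu = 2 * (g y * g' y * (1+y)^mu) by ring,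
                  abs_mul, abs_two]
            _ ≤ ε * (g y^2*(1+y)^(mu-1)) + (g' y^2*(1+y)^(mu+1))/ε := by
                convert h using 2 <;> ring
            _ = ε * (g y^2*(1+y)^(mu-1)) + (1/ε) * (g' y^2*(1+y)^(mu+1)) := by ring
    _ = ε * (∫ y in (0:ℝ)..R, g y^2*(1+y)^(mu-1))
        + (1/ε) * (∫ y in (0:ℝ)..R, g' y^2*(1+y)^(mu+1)) := by
        rw [intervalIntegral.integral_add ((hiA.const_mul ε)) ((hiB.const_mul (1/ε))),
          intervalIntegral.integral_const_mul, intervalIntegral.integral_const_mul]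
    _ ≤ ε * (∫ y in (0:ℝ)..R, g y^2*(1+y)^(mu-1))
        + (1/ε) * (∫ y in Ioi 0, g' y^2*(1+y)^(mu+1)) := by
        have h1 := (B_tail_le hg' hBI (le_refl 0) hR)
        gcongr

end oneD2



section oneD3
variable {mu : ℝ} {g g' : ℝ → ℝ}

lemma gR_bound (hmu : 0 < mu) (hg : ∀ y, HasDerivAt g (g' y) y) (hg' : Continuous g')
    (hBI : IntegrableOn (fun y => g' y^2*(1+y)^(mu+1)) (Ioi 0) volume)
    (hlim : Tendsto g atTop (𝓝 0)) {R t : ℝ} (hR : 0 ≤ R) (ht : 0 < t) :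
    |g R| ≤ t/2 * (∫ y in Ioi R, g' y^2*(1+y)^(mu+1)) + 1/(2*t*mu) * (1+R)^(-mu) := by
  set D := t/2 * (∫ y in Ioi R, g' y^2*(1+y)^(mu+1)) + 1/(2*t*mu) * (1+R)^(-mu) with hD
  have hbd : ∀ S, R ≤ S → |g S - g R| ≤ D := by
    intro S hS
    have h0S : (0:ℝ) ≤ S := le_trans hR hS
    have huIcc : uIcc R S ⊆ Ici 0 := by
      rw [uIcc_of_le hS]; exact fun y hy => le_trans hR hy.1
    have hftc : ∫ y in R..S, g' y = g S - g R :=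
      intervalIntegral.integral_eq_sub_of_hasDerivAt (fun y _ => hg y)
        (hg'.intervalIntegrable R S)
    rw [← hftc]
    calc |∫ y in R..S, g' y| ≤ ∫ y in R..S, |g' y| :=
          intervalIntegral.abs_integral_le_integral_abs hS
      _ ≤ ∫ y in R..S, (t/2 * (g' y^2*(1+y)^(mu+1)) + 1/(2*t) * (1+y)^(-(mu+1))) := by
          apply intervalIntegral.integral_mono_on hS
          · exact (hg'.intervalIntegrable R S).abs
          · apply ContinuousOn.intervalIntegrable
            apply ContinuousOn.add
            · exact continuousOn_const.mul
                ((hg'.continuousOn.pow 2).mul ((contOn_w (mu+1)).mono huIcc))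
            · exact continuousOn_const.mul ((contOn_w (-(mu+1))).mono huIcc)
          · intro y hy
            have hy0 : (0:ℝ) ≤ y := le_trans hR hy.1
            have hw := wpos hy0
            have h := young_ineq (g' y * (1+y)^((mu+1)/2)) ((1+y)^(-((mu+1)/2))) t ht
            have e1 : g' y * (1+y)^((mu+1)/2) * (1+y)^(-((mu+1)/2)) = g' y := by
              rw [mul_assoc, ← Real.rpow_add hw]; simp
            have e2 : (g' y * (1+y)^((mu+1)/2))^2 = g' y^2*(1+y)^(mu+1) := by
              rw [mul_pow, sq_rpow hy0]; ring_nf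
            have e3 : ((1+y)^(-((mu+1)/2)))^2 = (1+y)^(-(mu+1)) := by
              rw [sq_rpow hy0]; ring_nf
            rw [e1, e2, e3] at h
            calc |g' y| ≤ (t * (g' y^2*(1+y)^(mu+1)) + (1+y)^(-(mu+1))/t) / 2 := by
                  have := abs_nonneg (g' y); linarith
              _ = t/2 * (g' y^2*(1+y)^(mu+1)) + 1/(2*t) * (1+y)^(-(mu+1)) := by ring
      _ = t/2 * (∫ y in R..S, g' y^2*(1+y)^(mu+1))
            + 1/(2*t) * (∫ y in R..S, (1+y)^(-(mu+1))) := by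
          rw [intervalIntegral.integral_add, intervalIntegral.integral_const_mul,
            intervalIntegral.integral_const_mul]
          · exact (ContinuousOn.intervalIntegrable
              ((hg'.continuousOn.pow 2).mul ((contOn_w (mu+1)).mono huIcc))).const_mul _
          · exact (ContinuousOn.intervalIntegrable
              ((contOn_w (-(mu+1))).mono huIcc)).const_mul _
      _ ≤ D := by
          rw [hD]
          have h1 : ∫ y in R..S, g' y^2*(1+y)^(mu+1) ≤ ∫ y in Ioi R, g' y^2*(1+y)^(mu+1) :=
            B_tail_le hg' hBI hR hS
          have h2 : ∫ y in R..S, (1+y)^(-(mu+1)) ≤ (1+R)^(-mu) / mu := by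
            have hder : ∀ y ∈ uIcc R S, HasDerivAt (fun z => -(1+z)^(-mu)/mu)
                ((1+y)^(-(mu+1))) y := by
              intro y hy
              have := ((hasDeriv_w (-mu) (huIcc hy)).fun_neg).div_const mu
              exact this.congr_deriv (by rw [show -mu - 1 = -(mu+1) by ring]; field_simp)
            have hint : IntervalIntegrable (fun y => (1+y)^(-(mu+1))) volume R S :=
              ContinuousOn.intervalIntegrable ((contOn_w (-(mu+1))).mono huIcc)
            rw [intervalIntegral.integral_eq_sub_of_hasDerivAt hder hint]
            have hSpos : (0:ℝ) ≤ (1+S)^(-mu) := le_of_lt (Real.rpow_pos_of_pos (wpos h0S) _)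
            rw [div_sub_div_same]
            exact div_le_div_of_nonneg_right (by linarith) (le_of_lt hmu)
          have htT : 0 < t/2 := by linarith
          have h2t : (0:ℝ) < 1/(2*t) := by positivity
          calc t/2 * (∫ y in R..S, g' y^2*(1+y)^(mu+1)) + 1/(2*t) * (∫ y in R..S, (1+y)^(-(mu+1)))
              ≤ t/2 * (∫ y in Ioi R, g' y^2*(1+y)^(mu+1)) + 1/(2*t) * ((1+R)^(-mu)/mu) := by
                gcongr
            _ = t/2 * (∫ y in Ioi R, g' y^2*(1+y)^(mu+1)) + 1/(2*t*mu) * (1+R)^(-mu) := by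
                ring
  have htend : Tendsto (fun S => |g S - g R|) atTop (𝓝 |0 - g R|) :=
    ((hlim.sub_const (g R)).abs)
  have : |0 - g R| ≤ D := by
    apply le_of_tendsto htend
    filter_upwards [eventually_ge_atTop R] with S hS using hbd S hS
  simpa using this

end oneD3



section oneD4
variable {mu : ℝ} {g g' : ℝ → ℝ}

lemma tail_nonneg (hg' : Continuous g') {N : ℝ} (hN : 0 ≤ N) :
    0 ≤ ∫ y in Ioi N, g' y^2*(1+y)^(mu+1) := by
  apply setIntegral_nonneg measurableSet_Ioi
  intro y hy
  have := wpos (le_trans hN (le_of_lt hy))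
  positivity

lemma hR_bound (hmu : 0 < mu) (hg : ∀ y, HasDerivAt g (g' y) y) (hg' : Continuous g')
    (hBI : IntegrableOn (fun y => g' y^2*(1+y)^(mu+1)) (Ioi 0) volume)
    (hlim : Tendsto g atTop (𝓝 0)) {R : ℝ} (hR : 0 ≤ R) :
    g R^2*(1+R)^mu
      ≤ ((∫ y in Ioi 0, g' y^2*(1+y)^(mu+1))/2 + 1/(2*mu))^2 := by
  set B := ∫ y in Ioi 0, g' y^2*(1+y)^(mu+1) with hBdef
  set T := ∫ y in Ioi R, g' y^2*(1+y)^(mu+1) with hTdef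
  have hw := wpos hR
  set t := (1+R)^(-mu/2) with htdef
  have ht : 0 < t := Real.rpow_pos_of_pos hw _
  have hT0 : 0 ≤ T := tail_nonneg hg' hR
  have hTB : T ≤ B := B_tail_le_B hg' hBI hR
  have hb := gR_bound hmu hg hg' hBI hlim hR ht
  have ht2 : t^2 = (1+R)^(-mu) := by
    rw [htdef, sq_rpow hR]; ring_nf
  have hkey : |g R| ≤ t * (T/2 + 1/(2*mu)) := by
    have e : 1/(2*t*mu) * (1+R)^(-mu) = t * (1/(2*mu)) := by
      rw [← ht2]; field_simp
    calc |g R| ≤ t/2 * T + 1/(2*t*mu) * (1+R)^(-mu) := hb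
      _ = t * (T/2 + 1/(2*mu)) := by rw [e]; ring
  have hsq : g R^2 ≤ t^2 * (T/2 + 1/(2*mu))^2 := by
    have h1 : |g R|^2 ≤ (t * (T/2 + 1/(2*mu)))^2 :=
      pow_le_pow_left₀ (abs_nonneg _) hkey 2
    rw [sq_abs] at h1
    calc g R^2 ≤ (t * (T/2 + 1/(2*mu)))^2 := h1
      _ = t^2 * (T/2 + 1/(2*mu))^2 := by ring
  have hcancel : (1+R)^(-mu) * (1+R)^mu = 1 := by
    rw [← Real.rpow_add hw]; simp
  calc g R^2*(1+R)^mu ≤ t^2 * (T/2 + 1/(2*mu))^2 * (1+R)^mu := by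
        have hwp : 0 < (1+R)^mu := Real.rpow_pos_of_pos hw _
        exact mul_le_mul_of_nonneg_right hsq (le_of_lt hwp)
    _ = (T/2 + 1/(2*mu))^2 := by rw [ht2, mul_comm ((1+R)^(-mu)) _, mul_assoc, hcancel, mul_one]
    _ ≤ (B/2 + 1/(2*mu))^2 := by
        have h1 : 0 ≤ T/2 + 1/(2*mu) := by positivity
        have h2 : T/2 + 1/(2*mu) ≤ B/2 + 1/(2*mu) := by linarith
        exact pow_le_pow_left₀ h1 h2 2

lemma integrable_of_AR_bounded (hg : Continuous g) {K : ℝ}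
    (hK : ∀ R : ℝ, 0 ≤ R → (∫ y in (0:ℝ)..R, g y^2*(1+y)^(mu-1)) ≤ K) :
    IntegrableOn (fun y => g y^2*(1+y)^(mu-1)) (Ioi 0) volume := by
  apply integrableOn_Ioi_of_intervalIntegral_norm_bounded K 0
    (b := fun n : ℕ => (n:ℝ)) ?_ tendsto_natCast_atTop_atTop ?_
  · intro n
    apply IntegrableOn.mono_set ?_ Ioc_subset_Icc_self
    apply ContinuousOn.integrableOn_Icc
    exact (hg.continuousOn.pow 2).mul ((contOn_w (mu-1)).mono (fun y hy => hy.1))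
  · filter_upwards with n
    have hEq : EqOn (fun y => ‖g y^2*(1+y)^(mu-1)‖) (fun y => g y^2*(1+y)^(mu-1))
        (uIcc 0 (n:ℝ)) := by
      intro y hy
      have hy0 : (0:ℝ) ≤ y := by
        rw [uIcc_of_le (by positivity : (0:ℝ) ≤ (n:ℝ))] at hy
        exact hy.1
      have := wpos hy0
      simp only [Real.norm_eq_abs]
      rw [abs_of_nonneg (by positivity)]
    rw [intervalIntegral.integral_congr hEq]
    exact hK _ (by positivity)

lemma exists_small_h (hg : Continuous g)
    (hInt : IntegrableOn (fun y => g y^2*(1+y)^(mu-1)) (Ioi 0) volume)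
    {δ : ℝ} (hδ : 0 < δ) (N : ℝ) :
    ∃ R, max N 0 ≤ R ∧ g R^2*(1+R)^mu ≤ δ := by
  by_contra hcon
  push_neg at hcon
  set N' := max N 0 with hN'
  have hN'0 : (0:ℝ) ≤ N' := le_max_right N 0
  set A := ∫ y in Ioi 0, g y^2*(1+y)^(mu-1) with hA
  set R := max N' (Real.exp (A/δ + Real.log (1+N') + 1) - 1) with hRdef
  have hNR : N' ≤ R := le_max_left _ _
  have hR0 : (0:ℝ) ≤ R := le_trans hN'0 hNR
  have hlog : A/δ + Real.log (1+N') + 1 ≤ Real.log (1+R) := by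
    have h1 : Real.exp (A/δ + Real.log (1+N') + 1) ≤ 1 + R := by
      have := le_max_right N' (Real.exp (A/δ + Real.log (1+N') + 1) - 1)
      linarith
    calc A/δ + Real.log (1+N') + 1 = Real.log (Real.exp (A/δ + Real.log (1+N') + 1)) :=
          (Real.log_exp _).symm
      _ ≤ Real.log (1+R) := Real.log_le_log (Real.exp_pos _) h1
  -- lower bound for A
  have hsub : Ioc N' R ⊆ Ioi (0:ℝ) := fun y hy => lt_of_le_of_lt hN'0 hy.1
  have h1 : ∫ y in Ioc N' R, g y^2*(1+y)^(mu-1) ≤ A := by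
    apply setIntegral_mono_set hInt
    · filter_upwards [ae_restrict_mem measurableSet_Ioi] with y hy
      have := wpos (le_of_lt hy)
      positivity
    · exact HasSubset.Subset.eventuallyLE hsub
  have h2 : ∫ y in Ioc N' R, δ*(1+y)⁻¹ ≤ ∫ y in Ioc N' R, g y^2*(1+y)^(mu-1) := by
    apply setIntegral_mono_on
    · apply IntegrableOn.mono_set ?_ Ioc_subset_Icc_self
      apply ContinuousOn.integrableOn_Icc
      apply continuousOn_const.mul
      apply ContinuousOn.inv₀
      · exact (continuous_const.add continuous_id).continuousOn
      · intro y hy; exact ne_of_gt (wpos (le_trans hN'0 hy.1))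
    · exact hInt.mono_set hsub
    · exact measurableSet_Ioc
    · intro y hy
      have hy0 : (0:ℝ) ≤ y := le_trans hN'0 (le_of_lt hy.1)
      have hw := wpos hy0
      have hh : δ ≤ g y^2*(1+y)^mu := le_of_lt (hcon y (le_of_lt hy.1))
      have hsplit : (1+y)^(mu-1) = (1+y)^mu * (1+y)⁻¹ := by
        rw [Real.rpow_sub hw, Real.rpow_one, div_eq_mul_inv]
      rw [hsplit, ← mul_assoc]
      have hinv : (0:ℝ) ≤ (1+y)⁻¹ := by positivity
      exact mul_le_mul_of_nonneg_right hh hinv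
  have h3 : ∫ y in Ioc N' R, δ*(1+y)⁻¹ = δ * (Real.log (1+R) - Real.log (1+N')) := by
    rw [← intervalIntegral.integral_of_le hNR]
    have hder : ∀ y ∈ uIcc N' R, HasDerivAt (fun z => δ * Real.log (1+z)) (δ*(1+y)⁻¹) y := by
      intro y hy
      have hy0 : (0:ℝ) ≤ y := by
        rw [uIcc_of_le hNR] at hy; exact le_trans hN'0 hy.1
      have hw := wpos hy0
      have h := (((hasDerivAt_id y).const_add 1).log (ne_of_gt hw)).const_mul δ
      exact h.congr_deriv (by simp [div_eq_mul_inv])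
    have hint : IntervalIntegrable (fun y => δ*(1+y)⁻¹) volume N' R := by
      apply ContinuousOn.intervalIntegrable
      apply continuousOn_const.mul
      apply ContinuousOn.inv₀ (continuous_const.add continuous_id).continuousOn
      intro y hy
      rw [uIcc_of_le hNR] at hy
      exact ne_of_gt (wpos (le_trans hN'0 hy.1))
    rw [intervalIntegral.integral_eq_sub_of_hasDerivAt hder hint]
    ring
  rw [h3] at h2
  have hfin : A + δ ≤ A := by
    have : δ * (A/δ + 1) ≤ δ * (Real.log (1+R) - Real.log (1+N')) := by
      apply mul_le_mul_of_nonneg_left ?_ (le_of_lt hδ)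
      linarith
    have he : δ * (A/δ + 1) = A + δ := by field_simp
    linarith
  linarith

end oneD4

section oneD5
variable {mu : ℝ} {g g' : ℝ → ℝ}

lemma AR_nonneg (hg : Continuous g) {R : ℝ} (hR : 0 ≤ R) :
    0 ≤ ∫ y in (0:ℝ)..R, g y^2*(1+y)^(mu-1) := by
  apply intervalIntegral.integral_nonneg hR
  intro y hy
  have := wpos hy.1
  positivity

lemma hardy1 (hmu : 0 < mu) (hg : ∀ y, HasDerivAt g (g' y) y) (hg' : Continuous g')
    (hBI : IntegrableOn (fun y => g' y^2*(1+y)^(mu+1)) (Ioi 0) volume)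
    (hlim : Tendsto g atTop (𝓝 0)) :
    IntegrableOn (fun y => g y^2*(1+y)^(mu-1)) (Ioi 0) volume ∧
    (∫ y in Ioi 0, g y^2*(1+y)^(mu-1)) ≤ (2/mu)^2 * ∫ y in Ioi 0, g' y^2*(1+y)^(mu+1) := by
  have hgc := cont_g hg
  set B := ∫ y in Ioi 0, g' y^2*(1+y)^(mu+1) with hBdef
  have hB0 : 0 ≤ B := tail_nonneg hg' (le_refl 0)
  set M := (B/2 + 1/(2*mu))^2 with hMdef
  have hM0 : 0 ≤ M := sq_nonneg _
  have hMb : ∀ R : ℝ, 0 ≤ R → g R^2*(1+R)^mu ≤ M := fun R hR =>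
    hR_bound hmu hg hg' hBI hlim hR
  have hμ2 : (0:ℝ) < mu/2 := by linarith
  have hinv : 1/(mu/2) = 2/mu := by field_simp
  -- uniform bound on truncated integrals
  have hARle : ∀ R : ℝ, 0 ≤ R →
      (∫ y in (0:ℝ)..R, g y^2*(1+y)^(mu-1)) ≤ (2/mu) * (M + (2/mu)*B) := by
    intro R hR
    set AR := ∫ y in (0:ℝ)..R, g y^2*(1+y)^(mu-1) with hARdef
    have hkey := key_ineq hg hg' hBI hR hμ2
    rw [hinv] at hkey
    have h1 : mu * AR - (g R^2*(1+R)^mu - g 0^2) ≤ (mu/2) * AR + (2/mu) * B :=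
      le_trans (le_abs_self _) hkey
    have h2 : g R^2*(1+R)^mu ≤ M := hMb R hR
    have h3 : 0 ≤ g 0^2 := sq_nonneg _
    have h5 : (mu/2)*AR ≤ M + (2/mu)*B := by linarith
    have h6 : (2/mu)*((mu/2)*AR) ≤ (2/mu)*(M + (2/mu)*B) :=
      mul_le_mul_of_nonneg_left h5 (by positivity)
    have h7 : (2/mu)*((mu/2)*AR) = AR := by field_simp
    linarith
  have hInt : IntegrableOn (fun y => g y^2*(1+y)^(mu-1)) (Ioi 0) volume :=
    integrable_of_AR_bounded hgc hARle
  refine ⟨hInt, ?_⟩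
  set A := ∫ y in Ioi 0, g y^2*(1+y)^(mu-1) with hAdef
  have htendA : Tendsto (fun R : ℝ => ∫ y in (0:ℝ)..R, g y^2*(1+y)^(mu-1)) atTop (𝓝 A) :=
    intervalIntegral_tendsto_integral_Ioi 0 hInt tendsto_id
  have hfinal : (mu/2) * A ≤ (2/mu) * B := by
    have hstep : ∀ δ : ℝ, 0 < δ → (mu/2) * (A - δ) ≤ δ + (2/mu) * B := by
      intro δ hδ
      have hev : ∀ᶠ R : ℝ in atTop, A - δ ≤ ∫ y in (0:ℝ)..R, g y^2*(1+y)^(mu-1) := by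
        have := htendA (Ioi_mem_nhds (show A - δ < A by linarith))
        filter_upwards [this] with R hR using le_of_lt hR
      rcases hev.exists_forall_of_atTop with ⟨N, hN⟩
      obtain ⟨R, hRN, hhR⟩ := exists_small_h hgc hInt hδ N
      have hR0 : (0:ℝ) ≤ R := le_trans (le_max_right N 0) hRN
      set AR := ∫ y in (0:ℝ)..R, g y^2*(1+y)^(mu-1) with hARdef
      have hARA : A - δ ≤ AR := hN R (le_trans (le_max_left N 0) hRN)
      have hkey := key_ineq hg hg' hBI hR0 hμ2
      rw [hinv] at hkey
      have h1 : mu * AR - (g R^2*(1+R)^mu - g 0^2) ≤ (mu/2) * AR + (2/mu) * B :=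
        le_trans (le_abs_self _) hkey
      have h3 : 0 ≤ g 0^2 := sq_nonneg _
      have h6 : mu * AR = (mu/2)*AR + (mu/2)*AR := by ring
      have h7 : (mu/2)*(A - δ) ≤ (mu/2)*AR :=
        mul_le_mul_of_nonneg_left hARA (le_of_lt hμ2)
      linarith
    apply le_of_forall_pos_le_add
    intro ε hε
    have hc : (0:ℝ) < 1 + mu/2 := by linarith
    set δ := ε/(1+mu/2) with hδdef
    have hδ : 0 < δ := by positivity
    have h := hstep δ hδ
    have he : (mu/2) * (A - δ) = (mu/2)*A - (mu/2)*δ := by ring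
    have he2 : δ + (mu/2)*δ = ε := by
      rw [hδdef]; field_simp
    linarith
  -- conclude
  have h6 : (2/mu)*((mu/2)*A) ≤ (2/mu)*((2/mu)*B) :=
    mul_le_mul_of_nonneg_left hfinal (by positivity)
  have h7 : (2/mu)*((mu/2)*A) = A := by field_simp
  have h8 : (2/mu)*((2/mu)*B) = (2/mu)^2*B := by ring
  linarith

end oneD5

section oneD6
variable {mu : ℝ} {g g' : ℝ → ℝ}

lemma hardy2 (hmu : mu < 0) (hg : ∀ y, HasDerivAt g (g' y) y) (hg' : Continuous g')
    (hBI : IntegrableOn (fun y => g' y^2*(1+y)^(mu+1)) (Ioi 0) volume) :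
    IntegrableOn (fun y => g y^2*(1+y)^(mu-1)) (Ioi 0) volume ∧
    ∀ ε : ℝ, 0 < ε → (-mu) * (∫ y in Ioi 0, g y^2*(1+y)^(mu-1))
      ≤ g 0^2 + ε * (∫ y in Ioi 0, g y^2*(1+y)^(mu-1))
        + (1/ε) * ∫ y in Ioi 0, g' y^2*(1+y)^(mu+1) := by
  have hgc := cont_g hg
  set nu := -mu with hnu
  have hν : 0 < nu := by rw [hnu]; linarith
  set B := ∫ y in Ioi 0, g' y^2*(1+y)^(mu+1) with hBdef
  have hB0 : 0 ≤ B := tail_nonneg hg' (le_refl 0)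
  have hstep : ∀ R ε : ℝ, 0 ≤ R → 0 < ε →
      nu * (∫ y in (0:ℝ)..R, g y^2*(1+y)^(mu-1))
        ≤ g 0^2 + ε * (∫ y in (0:ℝ)..R, g y^2*(1+y)^(mu-1)) + (1/ε) * B := by
    intro R ε hR hε
    set AR := ∫ y in (0:ℝ)..R, g y^2*(1+y)^(mu-1) with hARdef
    have hkey := key_ineq hg hg' hBI hR hε
    have h1 : -(mu * AR - (g R^2*(1+R)^mu - g 0^2)) ≤ ε * AR + (1/ε) * B :=
      le_trans (neg_le_abs _) hkey
    have hhR : 0 ≤ g R^2*(1+R)^mu := by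
      have := Real.rpow_pos_of_pos (wpos hR) mu
      positivity
    have he : nu * AR = -(mu*AR) := by rw [hnu]; ring
    linarith
  -- uniform bound with ε = nu/2
  have hν2 : (0:ℝ) < nu/2 := by linarith
  have hinv : 1/(nu/2) = 2/nu := by field_simp
  have hARle : ∀ R : ℝ, 0 ≤ R →
      (∫ y in (0:ℝ)..R, g y^2*(1+y)^(mu-1)) ≤ (2/nu) * (g 0^2 + (2/nu)*B) := by
    intro R hR
    have h := hstep R (nu/2) hR hν2
    rw [hinv] at h
    set AR := ∫ y in (0:ℝ)..R, g y^2*(1+y)^(mu-1) with hARdef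
    have h5 : (nu/2)*AR ≤ g 0^2 + (2/nu)*B := by linarith
    have h6 : (2/nu)*((nu/2)*AR) ≤ (2/nu)*(g 0^2 + (2/nu)*B) :=
      mul_le_mul_of_nonneg_left h5 (by positivity)
    have h7 : (2/nu)*((nu/2)*AR) = AR := by field_simp
    linarith
  have hInt : IntegrableOn (fun y => g y^2*(1+y)^(mu-1)) (Ioi 0) volume :=
    integrable_of_AR_bounded hgc hARle
  refine ⟨hInt, ?_⟩
  intro ε hε
  set A := ∫ y in Ioi 0, g y^2*(1+y)^(mu-1) with hAdef
  have htendA : Tendsto (fun R : ℝ => ∫ y in (0:ℝ)..R, g y^2*(1+y)^(mu-1)) atTop (𝓝 A) :=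
    intervalIntegral_tendsto_integral_Ioi 0 hInt tendsto_id
  have hL : Tendsto (fun R : ℝ => nu * (∫ y in (0:ℝ)..R, g y^2*(1+y)^(mu-1))) atTop
      (𝓝 (nu * A)) := htendA.const_mul nu
  have hRt : Tendsto (fun R : ℝ => g 0^2 + ε * (∫ y in (0:ℝ)..R, g y^2*(1+y)^(mu-1)) + (1/ε) * B)
      atTop (𝓝 (g 0^2 + ε * A + (1/ε) * B)) := by
    exact ((htendA.const_mul ε).const_add _).add_const _
  apply le_of_tendsto_of_tendsto hL hRt
  filter_upwards [eventually_ge_atTop (0:ℝ)] with R hR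
  exact hstep R ε hR hε

end oneD6



section perx
variable {lam : ℝ} {g g' : ℝ → ℝ}

/-- integrand conversions on `Ioi 0` -/
lemma lint_eqA (lam : ℝ) (g : ℝ → ℝ) :
    ∫⁻ y in Ioi (0:ℝ), ENNReal.ofReal ((g y * (1+y)^lam)^2)
      = ∫⁻ y in Ioi (0:ℝ), ENNReal.ofReal (g y^2*(1+y)^(2*lam+1-1)) := by
  apply setLIntegral_congr_fun measurableSet_Ioi
  intro y hy; dsimp only
  congr 1
  rw [mul_pow, sq_rpow (le_of_lt hy)]
  ring_nf

lemma lint_eqB (lam : ℝ) (g' : ℝ → ℝ) :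
    ∫⁻ y in Ioi (0:ℝ), ENNReal.ofReal ((g' y * (1+y)^(lam+1))^2)
      = ∫⁻ y in Ioi (0:ℝ), ENNReal.ofReal (g' y^2*(1+y)^(2*lam+1+1)) := by
  apply setLIntegral_congr_fun measurableSet_Ioi
  intro y hy; dsimp only
  congr 1
  rw [mul_pow, sq_rpow (le_of_lt hy)]
  ring_nf

lemma integrableOn_of_fin {mu : ℝ} {g' : ℝ → ℝ} (hg' : Continuous g')
    (hfin : (∫⁻ y in Ioi (0:ℝ), ENNReal.ofReal (g' y^2*(1+y)^(mu+1))) ≠ ∞) :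
    IntegrableOn (fun y => g' y^2*(1+y)^(mu+1)) (Ioi 0) volume := by
  constructor
  · apply Measurable.aestronglyMeasurable
    exact (hg'.measurable.pow measurable_const).mul
      ((measurable_const.add measurable_id).pow measurable_const)
  · rw [hasFiniteIntegral_iff_ofReal]
    · exact lt_of_le_of_ne le_top hfin
    · filter_upwards [ae_restrict_mem measurableSet_Ioi] with y hy
      have := wpos (le_of_lt hy)
      positivity

lemma ae_nonnegA {mu : ℝ} (g : ℝ → ℝ) :
    0 ≤ᶠ[ae (volume.restrict (Ioi (0:ℝ)))] fun y => g y^2*(1+y)^(mu-1) := by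
  filter_upwards [ae_restrict_mem measurableSet_Ioi] with y hy
  have := wpos (le_of_lt hy)
  positivity

lemma ae_nonnegB {mu : ℝ} (g' : ℝ → ℝ) :
    0 ≤ᶠ[ae (volume.restrict (Ioi (0:ℝ)))] fun y => g' y^2*(1+y)^(mu+1) := by
  filter_upwards [ae_restrict_mem measurableSet_Ioi] with y hy
  have := wpos (le_of_lt hy)
  positivity

/-- per-x case (i), in `ℝ≥0∞`. -/
lemma perx1 (hmu : 0 < 2*lam+1) (hg : ∀ y, HasDerivAt g (g' y) y) (hg' : Continuous g')
    (hlim : Tendsto g atTop (𝓝 0)) :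
    (∫⁻ y in Ioi (0:ℝ), ENNReal.ofReal ((g y * (1+y)^lam)^2))
      ≤ ENNReal.ofReal ((2/(2*lam+1))^2)
        * ∫⁻ y in Ioi (0:ℝ), ENNReal.ofReal ((g' y * (1+y)^(lam+1))^2) := by
  set mu := 2*lam+1 with hmudef
  rw [lint_eqA lam g, lint_eqB lam g']
  by_cases hfin : (∫⁻ y in Ioi (0:ℝ), ENNReal.ofReal (g' y^2*(1+y)^(mu+1))) = ∞
  · rw [hfin, ENNReal.mul_top]
    · exact le_top
    · simp only [ne_eq, ENNReal.ofReal_eq_zero, not_le]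
      positivity
  · have hBI := integrableOn_of_fin hg' hfin
    obtain ⟨hIA, hle⟩ := hardy1 hmu hg hg' hBI hlim
    rw [← ofReal_integral_eq_lintegral_ofReal hIA (ae_nonnegA g),
      ← ofReal_integral_eq_lintegral_ofReal hBI (ae_nonnegB g'),
      ← ENNReal.ofReal_mul (by positivity)]
    exact ENNReal.ofReal_le_ofReal hle

/-- per-x case (ii) finiteness bound, in `ℝ≥0∞`. -/
lemma perx2a (hmu : 2*lam+1 < 0) (hg : ∀ y, HasDerivAt g (g' y) y) (hg' : Continuous g') :
    (∫⁻ y in Ioi (0:ℝ), ENNReal.ofReal ((g y * (1+y)^lam)^2))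
      ≤ ENNReal.ofReal (2/(-(2*lam+1))) * (ENNReal.ofReal (g 0^2)
          + ENNReal.ofReal (2/(-(2*lam+1)))
            * ∫⁻ y in Ioi (0:ℝ), ENNReal.ofReal ((g' y * (1+y)^(lam+1))^2)) := by
  set mu := 2*lam+1 with hmudef
  set nu := -mu with hnudef
  have hν : 0 < nu := by rw [hnudef]; linarith
  rw [lint_eqA lam g, lint_eqB lam g']
  have hnupos : (0:ℝ) < 2/nu := div_pos two_pos hν
  have hne : ENNReal.ofReal (2/nu) ≠ 0 := by
    simp only [ne_eq, ENNReal.ofReal_eq_zero, not_le]; exact hnupos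
  by_cases hfin : (∫⁻ y in Ioi (0:ℝ), ENNReal.ofReal (g' y^2*(1+y)^(mu+1))) = ∞
  · have htop : ENNReal.ofReal (2/nu) * (ENNReal.ofReal (g 0^2)
        + ENNReal.ofReal (2/nu) * ⊤) = ⊤ := by
      rw [ENNReal.mul_top hne, add_top, ENNReal.mul_top hne]
    rw [hfin, htop]
    exact le_top
  · have hBI := integrableOn_of_fin hg' hfin
    obtain ⟨hIA, hfam⟩ := hardy2 hmu hg hg' hBI
    set A := ∫ y in Ioi 0, g y^2*(1+y)^(mu-1) with hA
    set B := ∫ y in Ioi 0, g' y^2*(1+y)^(mu+1) with hB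
    have hbound : A ≤ (2/nu) * (g 0^2 + (2/nu)*B) := by
      have h := hfam (nu/2) (by linarith)
      have hinv : 1/(nu/2) = 2/nu := by field_simp
      rw [hinv] at h
      have h5 : (nu/2)*A ≤ g 0^2 + (2/nu)*B := by rw [← hnudef] at h; linarith
      have h6 : (2/nu)*((nu/2)*A) ≤ (2/nu)*(g 0^2 + (2/nu)*B) :=
        mul_le_mul_of_nonneg_left h5 (le_of_lt hnupos)
      have h7 : (2/nu)*((nu/2)*A) = A := by field_simp
      linarith
    rw [← ofReal_integral_eq_lintegral_ofReal hIA (ae_nonnegA g),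
      ← ofReal_integral_eq_lintegral_ofReal hBI (ae_nonnegB g'),
      ← ENNReal.ofReal_mul (le_of_lt hnupos),
      ← ENNReal.ofReal_add (sq_nonneg _)
        (mul_nonneg (le_of_lt hnupos) (integral_nonneg_of_ae (ae_nonnegB g'))),
      ← ENNReal.ofReal_mul (le_of_lt hnupos)]
    exact ENNReal.ofReal_le_ofReal hbound

/-- per-x case (ii) family inequality, in `ℝ≥0∞`. -/
lemma perx2b (hmu : 2*lam+1 < 0) (hg : ∀ y, HasDerivAt g (g' y) y) (hg' : Continuous g')
    {ε : ℝ} (hε : 0 < ε) :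
    ENNReal.ofReal (-(2*lam+1)) * (∫⁻ y in Ioi (0:ℝ), ENNReal.ofReal ((g y * (1+y)^lam)^2))
      ≤ ENNReal.ofReal (g 0^2)
        + ENNReal.ofReal ε * (∫⁻ y in Ioi (0:ℝ), ENNReal.ofReal ((g y * (1+y)^lam)^2))
        + ENNReal.ofReal (1/ε)
          * ∫⁻ y in Ioi (0:ℝ), ENNReal.ofReal ((g' y * (1+y)^(lam+1))^2) := by
  set mu := 2*lam+1 with hmudef
  rw [lint_eqA lam g, lint_eqB lam g']
  by_cases hfin : (∫⁻ y in Ioi (0:ℝ), ENNReal.ofReal (g' y^2*(1+y)^(mu+1))) = ∞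
  · have hne : ENNReal.ofReal (1/ε) ≠ 0 := by
      simp only [ne_eq, ENNReal.ofReal_eq_zero, not_le]; positivity
    rw [hfin, ENNReal.mul_top hne]
    simp
  · have hBI := integrableOn_of_fin hg' hfin
    obtain ⟨hIA, hfam⟩ := hardy2 hmu hg hg' hBI
    have h := hfam ε hε
    rw [← ofReal_integral_eq_lintegral_ofReal hIA (ae_nonnegA g),
      ← ofReal_integral_eq_lintegral_ofReal hBI (ae_nonnegB g'),
      ← ENNReal.ofReal_mul (by linarith : (0:ℝ) ≤ -mu),
      ← ENNReal.ofReal_mul (le_of_lt hε),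
      ← ENNReal.ofReal_mul (by positivity : (0:ℝ) ≤ 1/ε),
      ← ENNReal.ofReal_add (sq_nonneg _) ?h1,
      ← ENNReal.ofReal_add ?h2 ?h3]
    · exact ENNReal.ofReal_le_ofReal h
    case h1 =>
      apply mul_nonneg (le_of_lt hε)
      exact integral_nonneg_of_ae (ae_nonnegA g)
    case h2 =>
      apply add_nonneg (sq_nonneg _)
      exact mul_nonneg (le_of_lt hε) (integral_nonneg_of_ae (ae_nonnegA g))
    case h3 =>
      exact mul_nonneg (by positivity) (integral_nonneg_of_ae (ae_nonnegB g'))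

end perx


lemma scalar_final {nu A B C : ℝ} (hν : 0 < nu) (hA : 0 ≤ A) (hB : 0 ≤ B) (hC : 0 ≤ C)
    (h : ∀ ε : ℝ, 0 < ε → nu*A ≤ C + ε*A + (1/ε)*B) :
    Real.sqrt A ≤ Real.sqrt (1/nu) * Real.sqrt C + (2/nu) * Real.sqrt B := by
  set a := Real.sqrt A with ha
  set b := Real.sqrt B with hb
  set c := Real.sqrt C with hc
  have ha0 : 0 ≤ a := Real.sqrt_nonneg _
  have hb0 : 0 ≤ b := Real.sqrt_nonneg _
  have hc0 : 0 ≤ c := Real.sqrt_nonneg _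
  have haa : a^2 = A := Real.sq_sqrt hA
  have hbb : b^2 = B := Real.sq_sqrt hB
  have hcc : c^2 = C := Real.sq_sqrt hC
  set s := Real.sqrt nu with hs
  have hs0 : 0 < s := Real.sqrt_pos.2 hν
  have hss : s^2 = nu := Real.sq_sqrt (le_of_lt hν)
  have hsinv : Real.sqrt (1/nu) = 1/s := by
    rw [hs, one_div, one_div, Real.sqrt_inv]
  rw [hsinv]
  -- step 1 : nu*A ≤ C + 2*a*b
  have hmain : nu*A ≤ C + 2*a*b := by
    rcases eq_or_lt_of_le hA with hA0 | hApos
    · rw [← hA0]; simpa using hC.trans (le_add_of_nonneg_right (by positivity))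
    rcases eq_or_lt_of_le hB with hB0 | hBpos
    · -- B = 0
      have hcl : nu*A ≤ C := by
        apply le_of_forall_pos_le_add
        intro ε hε
        have := h (ε/A) (by positivity)
        have he : (ε/A)*A = ε := by field_simp
        have hb' : (1/(ε/A))*B = 0 := by rw [← hB0]; ring
        linarith
      have : 0 ≤ 2*a*b := by positivity
      linarith
    · -- B > 0
      have hbpos : 0 < b := Real.sqrt_pos.2 hBpos
      have hapos : 0 < a := Real.sqrt_pos.2 hApos
      have hε : 0 < b/a := by positivity
      have := h (b/a) hε
      have e1 : (b/a)*A = a*b := by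
        rw [← haa]; field_simp
      have e2 : (1/(b/a))*B = a*b := by
        rw [← hbb]; field_simp
      linarith
  -- step 2 : quadratic
  have hmain' : s^2*a^2 ≤ c^2 + 2*a*b := by rw [hss, haa, hcc]; exact hmain
  have hkey : s^2*a ≤ s*c + 2*b := by
    by_contra hcon
    push_neg at hcon
    have hapos : 0 < a := by
      rcases lt_or_eq_of_le ha0 with h | h
      · exact h
      · exfalso; rw [← h] at hcon; nlinarith [mul_nonneg (le_of_lt hs0) hc0]
    have h2 : (s*c + 2*b)*a < (s^2*a)*a := mul_lt_mul_of_pos_right hcon hapos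
    have h3 : s*c*a < c^2 := by nlinarith [hmain']
    have hcpos : 0 < c := by nlinarith [mul_nonneg (mul_nonneg (le_of_lt hs0) hc0) ha0]
    have h5 : s*a < c := by
      have h4 : (s*a)*c < c*c := by nlinarith
      exact (mul_lt_mul_iff_left₀ hcpos).1 h4
    have h6 : c < s*a := by
      have hsc : s*c < s*(s*a) := by nlinarith
      exact (mul_lt_mul_iff_right₀ hs0).1 hsc
    linarith
  calc a = (s^2*a)/s^2 := by field_simp
    _ ≤ (s*c + 2*b)/s^2 := by
        apply div_le_div_of_nonneg_right hkey
        positivity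
    _ = 1/s*c + 2/nu*b := by rw [← hss]; field_simp




section deriv2d
variable {f : ℝ → ℝ → ℝ} (hf : ContDiff ℝ 1 (fun p : ℝ × ℝ => f p.1 p.2))

lemma hderiv2 (hf : ContDiff ℝ 1 (fun p : ℝ × ℝ => f p.1 p.2)) (x y : ℝ) :
    HasDerivAt (fun y' => f x y') (pdy f x y) y := by
  have hdF : DifferentiableAt ℝ (fun p : ℝ × ℝ => f p.1 p.2) (x, y) :=
    (hf.differentiable one_ne_zero).differentiableAt
  have hin : DifferentiableAt ℝ (fun y' : ℝ => ((x, y') : ℝ × ℝ)) y :=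
    (differentiableAt_const x).prodMk differentiableAt_id
  have hcomp : DifferentiableAt ℝ (fun y' => f x y') y := by
    have := hdF.comp y hin
    exact this
  exact hcomp.hasDerivAt

lemma hpdy_eq (hf : ContDiff ℝ 1 (fun p : ℝ × ℝ => f p.1 p.2)) (x y : ℝ) :
    pdy f x y = fderiv ℝ (fun p : ℝ × ℝ => f p.1 p.2) (x, y) (0, 1) := by
  have h1 : HasDerivAt (fun y' : ℝ => ((x, y') : ℝ × ℝ)) (0, 1) y :=
    (hasDerivAt_const y x).prodMk (hasDerivAt_id y)
  have h2 : HasFDerivAt (fun p : ℝ × ℝ => f p.1 p.2)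
      (fderiv ℝ (fun p : ℝ × ℝ => f p.1 p.2) (x, y)) (x, y) :=
    ((hf.differentiable one_ne_zero) (x, y)).hasFDerivAt
  have h3 := h2.comp_hasDerivAt y h1
  simpa [pdy, Function.comp_def] using h3.deriv

lemma hGcont (hf : ContDiff ℝ 1 (fun p : ℝ × ℝ => f p.1 p.2)) :
    Continuous (fun p : ℝ × ℝ => pdy f p.1 p.2) := by
  have he : (fun p : ℝ × ℝ => pdy f p.1 p.2)
      = fun p : ℝ × ℝ => fderiv ℝ (fun q : ℝ × ℝ => f q.1 q.2) p ((0:ℝ), (1:ℝ)) := by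
    funext p
    exact hpdy_eq hf p.1 p.2
  rw [he]
  exact (hf.continuous_fderiv one_ne_zero).clm_apply continuous_const

end deriv2d







lemma ofReal_sq_rpow_half {c : ℝ} (hc : 0 ≤ c) :
    (ENNReal.ofReal (c^2)) ^ (1/2:ℝ) = ENNReal.ofReal c := by
  rw [ENNReal.ofReal_rpow_of_nonneg (by positivity) (by norm_num)]
  congr 1
  rw [← Real.rpow_natCast c 2, ← Real.rpow_mul hc]
  norm_num



/-- Lemma A.1: Hardy type inequalities on the half-plane strip `𝕋 × ℝ⁺`. -/
theorem hardy_type_inequalities (lam : ℝ) (f : ℝ → ℝ → ℝ)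
    (hf : ContDiff ℝ 1 (fun p : ℝ × ℝ => f p.1 p.2))
    (hper : ∀ x y : ℝ, f (x+1) y = f x y) :
    ((-1/2 < lam) → (∀ x : ℝ, Tendsto (fun y => f x y) atTop (𝓝 0)) →
      eLpNorm (fun p : ℝ × ℝ => f p.1 p.2 * wt p.2 ^ lam) 2 strip
        ≤ ENNReal.ofReal (2/(2*lam+1)) *
            eLpNorm (fun p : ℝ × ℝ => pdy f p.1 p.2 * wt p.2 ^ (lam+1)) 2 strip) ∧
    ((lam < -1/2) →
      eLpNorm (fun p : ℝ × ℝ => f p.1 p.2 * wt p.2 ^ lam) 2 strip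
        ≤ ENNReal.ofReal (Real.sqrt (-1/(2*lam+1))) *
              eLpNorm (fun x => f x 0) 2 (volume.restrict (Ioo (0:ℝ) 1))
          + ENNReal.ofReal (-(2/(2*lam+1))) *
              eLpNorm (fun p : ℝ × ℝ => pdy f p.1 p.2 * wt p.2 ^ (lam+1)) 2 strip) := by
  have hFc : Continuous (fun p : ℝ × ℝ => f p.1 p.2) := hf.continuous
  have hGc : Continuous (fun p : ℝ × ℝ => pdy f p.1 p.2) := hGcont hf
  -- measurable integrands
  have hmA : Measurable (fun p : ℝ × ℝ => ENNReal.ofReal ((f p.1 p.2 * (1+p.2)^lam)^2)) := by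
    apply ENNReal.measurable_ofReal.comp
    exact (hFc.measurable.mul
      ((measurable_const.add measurable_snd).pow measurable_const)).pow measurable_const
  have hmB : Measurable (fun p : ℝ × ℝ =>
      ENNReal.ofReal ((pdy f p.1 p.2 * (1+p.2)^(lam+1))^2)) := by
    apply ENNReal.measurable_ofReal.comp
    exact (hGc.measurable.mul
      ((measurable_const.add measurable_snd).pow measurable_const)).pow measurable_const
  have hmC : Measurable (fun x : ℝ => ENNReal.ofReal ((f x 0)^2)) := by
    apply ENNReal.measurable_ofReal.comp
    exact ((hFc.comp (continuous_id.prodMk continuous_const)).measurable).pow measurable_const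
  set Afun : ℝ → ℝ≥0∞ := fun x => ∫⁻ y in Ioi (0:ℝ), ENNReal.ofReal ((f x y * (1+y)^lam)^2)
    with hAfun
  set Bfun : ℝ → ℝ≥0∞ := fun x =>
    ∫⁻ y in Ioi (0:ℝ), ENNReal.ofReal ((pdy f x y * (1+y)^(lam+1))^2) with hBfun
  have hmAfun : Measurable Afun := Measurable.lintegral_prod_right' (f := fun p : ℝ × ℝ =>
    ENNReal.ofReal ((f p.1 p.2 * (1+p.2)^lam)^2)) hmA
  have hmBfun : Measurable Bfun := Measurable.lintegral_prod_right' (f := fun p : ℝ × ℝ =>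
    ENNReal.ofReal ((pdy f p.1 p.2 * (1+p.2)^(lam+1))^2)) hmB
  set AA := ∫⁻ x in Ioo (0:ℝ) 1, Afun x with hAA
  set BB := ∫⁻ x in Ioo (0:ℝ) 1, Bfun x with hBB
  set CC := ∫⁻ x in Ioo (0:ℝ) 1, ENNReal.ofReal ((f x 0)^2) with hCC
  -- eLpNorm identities
  have hL : eLpNorm (fun p : ℝ × ℝ => f p.1 p.2 * wt p.2 ^ lam) 2 strip = AA ^ (1/2:ℝ) := by
    rw [eLpNorm_two_sq]
    congr 1
    simp only [wt]
    rw [show strip = (volume.restrict (Ioo (0:ℝ) 1)).prod (volume.restrict (Ioi (0:ℝ))) from rfl,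
      lintegral_prod _ hmA.aemeasurable]
  have hR : eLpNorm (fun p : ℝ × ℝ => pdy f p.1 p.2 * wt p.2 ^ (lam+1)) 2 strip
      = BB ^ (1/2:ℝ) := by
    rw [eLpNorm_two_sq]
    congr 1
    simp only [wt]
    rw [show strip = (volume.restrict (Ioo (0:ℝ) 1)).prod (volume.restrict (Ioi (0:ℝ))) from rfl,
      lintegral_prod _ hmB.aemeasurable]
  have hCeq : eLpNorm (fun x => f x 0) 2 (volume.restrict (Ioo (0:ℝ) 1)) = CC ^ (1/2:ℝ) := by
    rw [eLpNorm_two_sq]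
  constructor
  · -- case (i)
    intro hlam hlim
    have hmu : 0 < 2*lam+1 := by linarith
    have hperx : ∀ x : ℝ, Afun x ≤ ENNReal.ofReal ((2/(2*lam+1))^2) * Bfun x := by
      intro x
      exact perx1 hmu (hderiv2 hf x) (hGc.comp (Continuous.prodMk_right x)) (hlim x)
    have hAB : AA ≤ ENNReal.ofReal ((2/(2*lam+1))^2) * BB := by
      calc AA ≤ ∫⁻ x in Ioo (0:ℝ) 1, ENNReal.ofReal ((2/(2*lam+1))^2) * Bfun x :=
            lintegral_mono hperx
        _ = ENNReal.ofReal ((2/(2*lam+1))^2) * BB := lintegral_const_mul _ hmBfun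
    rw [hL, hR]
    calc AA ^ (1/2:ℝ) ≤ (ENNReal.ofReal ((2/(2*lam+1))^2) * BB) ^ (1/2:ℝ) :=
          ENNReal.rpow_le_rpow hAB (by norm_num)
      _ = ENNReal.ofReal (2/(2*lam+1)) * BB ^ (1/2:ℝ) := by
          rw [ENNReal.mul_rpow_of_nonneg _ _ (by norm_num : (0:ℝ) ≤ 1/2),
            ofReal_sq_rpow_half (by positivity)]
  · -- case (ii)
    intro hlam
    have hmu : 2*lam+1 < 0 := by linarith
    set nu := -(2*lam+1) with hnu
    have hν : 0 < nu := by rw [hnu]; linarith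
    have hne0 : 2*lam+1 ≠ 0 := by linarith
    have hnuinv : -1/(2*lam+1) = 1/nu := by
      rw [hnu, div_eq_div_iff hne0 (by linarith : -(2*lam+1) ≠ 0)]; ring
    have hnu2 : -(2/(2*lam+1)) = 2/nu := by
      rw [hnu, neg_div', div_eq_div_iff hne0 (by linarith : -(2*lam+1) ≠ 0)]; ring
    rw [hL, hR, hCeq, hnuinv, hnu2]
    -- CC is finite
    have hCfin : CC ≠ ∞ := by
      have hint : IntegrableOn (fun x => (f x 0)^2) (Ioo (0:ℝ) 1) volume := by
        apply IntegrableOn.mono_set ?_ Ioo_subset_Icc_self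
        apply Continuous.integrableOn_Icc
        exact ((hFc.comp (continuous_id.prodMk continuous_const)).pow 2)
      have := (hasFiniteIntegral_iff_ofReal ?_).1 hint.2
      · exact ne_of_lt this
      · filter_upwards with x using sq_nonneg _
    by_cases hBfin : BB = ∞
    · have h2 : ENNReal.ofReal (2/nu) * BB ^ (1/2:ℝ) = ∞ := by
        rw [hBfin, ENNReal.top_rpow_of_pos (by norm_num), ENNReal.mul_top]
        simp only [ne_eq, ENNReal.ofReal_eq_zero, not_le]
        exact div_pos two_pos hν
      rw [h2]
      simp
    · -- AA finite
      have hAfin : AA ≠ ∞ := by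
        have hperx : ∀ x : ℝ, Afun x ≤ ENNReal.ofReal (2/nu) * (ENNReal.ofReal ((f x 0)^2)
            + ENNReal.ofReal (2/nu) * Bfun x) := by
          intro x
          exact perx2a hmu (hderiv2 hf x) (hGc.comp (Continuous.prodMk_right x))
        have h1 : AA ≤ ENNReal.ofReal (2/nu) * (CC + ENNReal.ofReal (2/nu) * BB) := by
          calc AA ≤ ∫⁻ x in Ioo (0:ℝ) 1, ENNReal.ofReal (2/nu) * (ENNReal.ofReal ((f x 0)^2)
                + ENNReal.ofReal (2/nu) * Bfun x) := lintegral_mono hperx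
            _ = ENNReal.ofReal (2/nu) * (CC + ENNReal.ofReal (2/nu) * BB) := by
                rw [lintegral_const_mul _ (hmC.fun_add (hmBfun.const_mul _)),
                  lintegral_add_left hmC, lintegral_const_mul _ hmBfun]
        apply ne_of_lt
        apply lt_of_le_of_lt h1
        apply ENNReal.mul_lt_top ENNReal.ofReal_lt_top
        apply ENNReal.add_lt_top.2
        exact ⟨lt_of_le_of_ne le_top hCfin,
          ENNReal.mul_lt_top ENNReal.ofReal_lt_top (lt_of_le_of_ne le_top hBfin)⟩
      -- the ε-family at the integrated level
      have hfam : ∀ ε : ℝ, 0 < ε → ENNReal.ofReal nu * AA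
          ≤ CC + ENNReal.ofReal ε * AA + ENNReal.ofReal (1/ε) * BB := by
        intro ε hε
        have hperx : ∀ x : ℝ, ENNReal.ofReal nu * Afun x ≤ ENNReal.ofReal ((f x 0)^2)
            + ENNReal.ofReal ε * Afun x + ENNReal.ofReal (1/ε) * Bfun x := by
          intro x
          have := perx2b hmu (hderiv2 hf x) (hGc.comp (Continuous.prodMk_right x)) hε
          rw [← hnu] at this
          exact this
        calc ENNReal.ofReal nu * AA
            = ∫⁻ x in Ioo (0:ℝ) 1, ENNReal.ofReal nu * Afun x :=
              (lintegral_const_mul _ hmAfun).symm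
          _ ≤ ∫⁻ x in Ioo (0:ℝ) 1, (ENNReal.ofReal ((f x 0)^2)
                + ENNReal.ofReal ε * Afun x + ENNReal.ofReal (1/ε) * Bfun x) :=
              lintegral_mono hperx
          _ = CC + ENNReal.ofReal ε * AA + ENNReal.ofReal (1/ε) * BB := by
              rw [lintegral_add_left (hmC.fun_add (hmAfun.const_mul _)),
                lintegral_add_left hmC, lintegral_const_mul _ hmAfun,
                lintegral_const_mul _ hmBfun]
      -- pass to real numbers
      set Ar := AA.toReal with hAr
      set Br := BB.toReal with hBr
      set Cr := CC.toReal with hCr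
      have hrfam : ∀ ε : ℝ, 0 < ε → nu*Ar ≤ Cr + ε*Ar + (1/ε)*Br := by
        intro ε hε
        have h := hfam ε hε
        have hRne : CC + ENNReal.ofReal ε * AA + ENNReal.ofReal (1/ε) * BB ≠ ∞ := by
          simp only [ne_eq, ENNReal.add_eq_top, not_or]
          refine ⟨⟨hCfin, ?_⟩, ?_⟩
          · exact ne_of_lt (ENNReal.mul_lt_top ENNReal.ofReal_lt_top
              (lt_of_le_of_ne le_top hAfin))
          · exact ne_of_lt (ENNReal.mul_lt_top ENNReal.ofReal_lt_top
              (lt_of_le_of_ne le_top hBfin))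
        have := ENNReal.toReal_mono hRne h
        rw [ENNReal.toReal_mul, ENNReal.toReal_ofReal (le_of_lt hν)] at this
        rw [ENNReal.toReal_add, ENNReal.toReal_add hCfin, ENNReal.toReal_mul,
          ENNReal.toReal_mul, ENNReal.toReal_ofReal (le_of_lt hε),
          ENNReal.toReal_ofReal (by positivity)] at this
        · exact this
        · exact ne_of_lt (ENNReal.mul_lt_top ENNReal.ofReal_lt_top
            (lt_of_le_of_ne le_top hAfin))
        · exact ENNReal.add_ne_top.2 ⟨hCfin, ne_of_lt (ENNReal.mul_lt_top
            ENNReal.ofReal_lt_top (lt_of_le_of_ne le_top hAfin))⟩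
        · exact ne_of_lt (ENNReal.mul_lt_top ENNReal.ofReal_lt_top
            (lt_of_le_of_ne le_top hBfin))
      have hsc := scalar_final hν ENNReal.toReal_nonneg ENNReal.toReal_nonneg
        ENNReal.toReal_nonneg hrfam
      -- conclude in ℝ≥0∞
      have hLne : AA ^ (1/2:ℝ) ≠ ∞ := by
        simp only [ne_eq, ENNReal.rpow_eq_top_iff, not_or, not_and, not_lt]
        constructor
        · intro h; norm_num
        · intro h; exact absurd h hAfin
      have hRne : ENNReal.ofReal (Real.sqrt (1/nu)) * CC ^ (1/2:ℝ)
          + ENNReal.ofReal (2/nu) * BB ^ (1/2:ℝ) ≠ ∞ := by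
        simp only [ne_eq, ENNReal.add_eq_top, not_or]
        constructor
        · apply ne_of_lt
          apply ENNReal.mul_lt_top ENNReal.ofReal_lt_top
          simp only [ENNReal.rpow_lt_top_iff_of_pos (by norm_num : (0:ℝ) < 1/2)]
          exact lt_of_le_of_ne le_top hCfin
        · apply ne_of_lt
          apply ENNReal.mul_lt_top ENNReal.ofReal_lt_top
          simp only [ENNReal.rpow_lt_top_iff_of_pos (by norm_num : (0:ℝ) < 1/2)]
          exact lt_of_le_of_ne le_top hBfin
      rw [← ENNReal.toReal_le_toReal hLne hRne]
      rw [ENNReal.toReal_add, ENNReal.toReal_mul, ENNReal.toReal_mul,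
        ENNReal.toReal_ofReal (Real.sqrt_nonneg _),
        ENNReal.toReal_ofReal (le_of_lt (div_pos two_pos hν)),
        ← ENNReal.toReal_rpow, ← ENNReal.toReal_rpow, ← ENNReal.toReal_rpow,
        ← Real.sqrt_eq_rpow, ← Real.sqrt_eq_rpow, ← Real.sqrt_eq_rpow]
      · exact hsc
      · exact ne_of_lt (ENNReal.mul_lt_top ENNReal.ofReal_lt_top (by
          simp only [ENNReal.rpow_lt_top_iff_of_pos (by norm_num : (0:ℝ) < 1/2)]
          exact lt_of_le_of_ne le_top hCfin))
      · exact ne_of_lt (ENNReal.mul_lt_top ENNReal.ofReal_lt_top (by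
          simp only [ENNReal.rpow_lt_top_iff_of_pos (by norm_num : (0:ℝ) < 1/2)]
          exact lt_of_le_of_ne le_top hBfin))


end
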